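/- Let α be a real number with 0 < α ≤ 1/2 and let p, q ≥ 0 be real numbers such that p + q ≥ 1 − 2α and such that 2√(2p(1−α)) + q ≥ 1 whenever p < 2α²/(1−α). Then for every real x with 0 < x ≤ α/(1−α), p/x + 2(1−α)x + q ≥ 1. -/

import Mathlib

/-- If `0 < α ≤ 1/2`, `p, q ≥ 0`, `p + q ≥ 1 - 2α`, and `2√(2p(1-α)) + q ≥ 1` whenever
`p < 2α²/(1-α)`, then `p/x + 2(1-α)x + q ≥ 1` for all `0 < x ≤ α/(1-α)`. -/
theorem dual_constraint_case_two (α p q : ℝ) (h0 : 0 < α) (h1 : α ≤ 1 / 2)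
    (hp : 0 ≤ p) (hq : 0 ≤ q) (hpq : 1 - 2 * α ≤ p + q)
    (hsp : p < 2 * α ^ 2 / (1 - α) → 1 ≤ 2 * Real.sqrt (2 * p * (1 - α)) + q) :
    ∀ x : ℝ, 0 < x → x ≤ α / (1 - α) → 1 ≤ p / x + 2 * (1 - α) * x + q := by
  intro x hx hxle
  have ha : (0:ℝ) < 1 - α := by linarith
  have hdiv : p / x * x = p := div_mul_cancel₀ p (ne_of_gt hx)
  by_cases hcase : p < 2 * α ^ 2 / (1 - α)
  · have key := hsp hcase
    set a := p / x with hadef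
    set b := 2 * (1 - α) * x with hbdef
    have hane : 0 ≤ a := div_nonneg hp hx.le
    have hbne : 0 ≤ b := by positivity
    have hab : a * b = 2 * p * (1 - α) := by
      rw [hadef, hbdef, div_mul_eq_mul_div, div_eq_iff (ne_of_gt hx)]
      ring
    have hs : Real.sqrt (2 * p * (1 - α)) = Real.sqrt a * Real.sqrt b := by
      rw [← hab, Real.sqrt_mul hane]
    have h2 : 2 * (Real.sqrt a * Real.sqrt b) ≤ a + b := by
      nlinarith [sq_nonneg (Real.sqrt a - Real.sqrt b), Real.sq_sqrt hane,
        Real.sq_sqrt hbne]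
    rw [hs] at key
    linarith
  · push_neg at hcase
    -- p ≥ 2α²/(1-α); f is decreasing on (0, α/(1-α)]
    have hxle' : x * (1 - α) ≤ α := (le_div_iff₀ ha).mp hxle
    have hpge : 2 * α ^ 2 ≤ p * (1 - α) := by
      have := (div_le_iff₀ ha).mp hcase
      linarith
    have h2 : 2 * α * x ≤ p := by
      have h2' : 2 * α * x * (1 - α) ≤ p * (1 - α) := by nlinarith
      exact le_of_mul_le_mul_right h2' ha
    have hstep : p * (1 - α) / α + 2 * α - 2 * (1 - α) * x ≤ p / x := by
      rw [le_div_iff₀ hx]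
      have h3 : 0 ≤ (α - x * (1 - α)) * (p - 2 * α * x) :=
        mul_nonneg (by linarith) (by linarith)
      have h4 : p * (1 - α) / α * α = p * (1 - α) := div_mul_cancel₀ _ (ne_of_gt h0)
      nlinarith
    have h5 : p ≤ p * (1 - α) / α := by
      rw [le_div_iff₀ h0]
      nlinarith
    linarith
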